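/- Let L ≥ 1, let n₀, n₁, …, n_L be positive integers, and for each l = 1, …, L let w^l be a real n_l × n_{l−1} matrix. Let a⁰ = r⁰ ∈ ℝ^{n₀}, define ANN activations inductively by a^l = R(w^l · a^{l−1}) for l = 1, …, L, and let r^1, …, r^L be arbitrary vectors with r^l ∈ ℝ^{n_l}. Then ‖r^L − a^L‖₂ ≤ Σ_{l=1}^{L} (Π_{k=l+1}^{L} ‖w^k‖₂) · ‖r^l − R(w^l · r^{l−1})‖₂, where the empty product (for l = L) equals 1. -/

import Mathlib

open scoped Matrix.Norms.L2Operator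

/-- Componentwise ReLU on `ℝⁿ` with the Euclidean norm. -/
noncomputable def reluV (n : ℕ) (x : EuclideanSpace ℝ (Fin n)) : EuclideanSpace ℝ (Fin n) :=
  WithLp.toLp 2 (fun i => max (x i) 0)

lemma reluV_lipschitz (n : ℕ) (x y : EuclideanSpace ℝ (Fin n)) :
    ‖reluV n x - reluV n y‖ ≤ ‖x - y‖ := by
  rw [EuclideanSpace.norm_eq, EuclideanSpace.norm_eq]
  apply Real.sqrt_le_sqrt
  apply Finset.sum_le_sum
  intro i _
  have h : |max (x i) 0 - max (y i) 0| ≤ |x i - y i| :=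
    abs_max_sub_max_le_abs _ _ _
  have h2 : |max (x i) 0 - max (y i) 0| ^ 2 ≤ |x i - y i| ^ 2 :=
    pow_le_pow_left₀ (abs_nonneg _) h 2
  simp only [reluV, PiLp.sub_apply, PiLp.toLp_apply, Real.norm_eq_abs]
  exact h2

theorem model_error_bound (L : ℕ) (hL : 1 ≤ L) (n : ℕ → ℕ) (hn : ∀ l, 0 < n l)
    (w : (l : ℕ) → Matrix (Fin (n (l + 1))) (Fin (n l)) ℝ)
    (a r : (l : ℕ) → EuclideanSpace ℝ (Fin (n l)))
    (h0 : r 0 = a 0)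
    (ha : ∀ l, a (l + 1) =
      reluV (n (l + 1)) ((EuclideanSpace.equiv (Fin (n (l + 1))) ℝ).symm ((w l).mulVec (a l)))) :
    ‖r L - a L‖ ≤ ∑ l ∈ Finset.range L, (∏ k ∈ Finset.Ico (l + 1) L, ‖w k‖) *
      ‖r (l + 1) -
        reluV (n (l + 1)) ((EuclideanSpace.equiv (Fin (n (l + 1))) ℝ).symm ((w l).mulVec (r l)))‖ := by
  clear hL
  induction L with
  | zero => simp [h0]
  | succ L ih =>
    set Rl := reluV (n (L + 1)) ((EuclideanSpace.equiv (Fin (n (L + 1))) ℝ).symm ((w L).mulVec (r L)))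
    have step : ‖r (L + 1) - a (L + 1)‖ ≤ ‖r (L + 1) - Rl‖ + ‖w L‖ * ‖r L - a L‖ := by
      have h1 : ‖r (L + 1) - a (L + 1)‖ ≤ ‖r (L + 1) - Rl‖ + ‖Rl - a (L + 1)‖ :=
        norm_sub_le_norm_sub_add_norm_sub _ _ _
      have h2 : ‖Rl - a (L + 1)‖ ≤ ‖w L‖ * ‖r L - a L‖ := by
        rw [ha L]
        refine (reluV_lipschitz _ _ _).trans ?_
        have : (EuclideanSpace.equiv (Fin (n (L + 1))) ℝ).symm ((w L).mulVec (r L)) -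
            (EuclideanSpace.equiv (Fin (n (L + 1))) ℝ).symm ((w L).mulVec (a L)) =
            (EuclideanSpace.equiv (Fin (n (L + 1))) ℝ).symm ((w L).mulVec (r L - a L)) := by
          ext i
          rw [Matrix.mulVec_sub]
          rfl
        rw [this]
        exact (w L).l2_opNorm_mulVec (r L - a L)
      linarith
    refine step.trans ?_
    rw [Finset.sum_range_succ]
    have hlast : (∏ k ∈ Finset.Ico (L + 1) (L + 1), ‖w k‖) = 1 := by
      rw [Finset.Ico_self, Finset.prod_empty]
    have hsum : ∑ l ∈ Finset.range L, (∏ k ∈ Finset.Ico (l + 1) (L + 1), ‖w k‖) *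
        ‖r (l + 1) - reluV (n (l + 1)) ((EuclideanSpace.equiv (Fin (n (l + 1))) ℝ).symm ((w l).mulVec (r l)))‖ =
        ‖w L‖ * ∑ l ∈ Finset.range L, (∏ k ∈ Finset.Ico (l + 1) L, ‖w k‖) *
        ‖r (l + 1) - reluV (n (l + 1)) ((EuclideanSpace.equiv (Fin (n (l + 1))) ℝ).symm ((w l).mulVec (r l)))‖ := by
      rw [Finset.mul_sum]
      apply Finset.sum_congr rfl
      intro l hl
      rw [Finset.mem_range] at hl
      rw [Finset.prod_Ico_succ_top (by omega : l + 1 ≤ L)]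
      ring
    rw [hsum, hlast, one_mul]
    have := mul_le_mul_of_nonneg_left ih (norm_nonneg (w L))
    linarith
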